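/- Let Φ = (φ_1, …, φ_M) be a frame for ℝ^N (its vectors span ℝ^N), and suppose c' ∈ ℝ^M with c'_i ≥ 0 attains the infimum of ‖I_N − S(c)‖₂ over all c ∈ ℝ^M with c_i ≥ 0. Then cond(S(c')) ≤ cond(ΦΦᵀ), where ΦΦᵀ = Σ_{i=1}^M φ_i φ_iᵀ is the frame operator of Φ. -/

import Mathlib

/-- The ℓ²→ℓ² operator norm (largest singular value) of a square real matrix. -/
noncomputable def opNorm {N : ℕ} (A : Matrix (Fin N) (Fin N) ℝ) : ℝ :=
  ‖(Matrix.toEuclideanCLM (𝕜 := ℝ) A : EuclideanSpace ℝ (Fin N) →L[ℝ] EuclideanSpace ℝ (Fin N))‖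

/-- `frameOp φ c = ∑ i, c i • φ i φ iᵀ`. -/
noncomputable def frameOp {N M : ℕ} (φ : Fin M → (Fin N → ℝ)) (c : Fin M → ℝ) :
    Matrix (Fin N) (Fin N) ℝ :=
  ∑ i, c i • Matrix.vecMulVec (φ i) (φ i)

/-- The largest eigenvalue of a Hermitian real matrix. -/
noncomputable def lamMax {N : ℕ} {A : Matrix (Fin N) (Fin N) ℝ} (hA : A.IsHermitian) : ℝ :=
  ⨆ i, hA.eigenvalues i

/-- The smallest eigenvalue of a Hermitian real matrix. -/
noncomputable def lamMin {N : ℕ} {A : Matrix (Fin N) (Fin N) ℝ} (hA : A.IsHermitian) : ℝ :=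
  ⨅ i, hA.eigenvalues i

open scoped RealInnerProductSpace

open Matrix in
lemma abs_le_opNorm_of_mem_spectrum {N : ℕ} (hN : 0 < N) {A : Matrix (Fin N) (Fin N) ℝ}
    {k : ℝ} (hk : k ∈ spectrum ℝ A) : |k| ≤ opNorm A := by
  haveI : Nonempty (Fin N) := Fin.pos_iff_nonempty.mp hN
  have h2 : k ∈ spectrum ℝ (Matrix.toEuclideanCLM (𝕜 := ℝ) A) := by
    rwa [AlgEquiv.spectrum_eq]
  simpa [opNorm] using spectrum.norm_le_norm_of_mem h2

open Matrix in
lemma opNorm_le_of_eig {N : ℕ} {A : Matrix (Fin N) (Fin N) ℝ}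
    (hA : A.IsHermitian) {r : ℝ} (hr : 0 ≤ r)
    (h : ∀ i, |hA.eigenvalues i| ≤ r) : opNorm A ≤ r := by
  refine ContinuousLinearMap.opNorm_le_bound _ hr fun x => ?_
  set b := hA.eigenvectorBasis with hb
  set T := Matrix.toEuclideanCLM (𝕜 := ℝ) A with hT
  have hsym : ∀ u v : EuclideanSpace ℝ (Fin N), ⟪T u, v⟫ = ⟪u, T v⟫ := by
    intro u v
    exact (Matrix.isHermitian_iff_isSymmetric.mp hA) u v
  have hTb : ∀ i, T (b i) = hA.eigenvalues i • b i := by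
    intro i
    apply (WithLp.equiv 2 (Fin N → ℝ)).injective
    rw [WithLp.equiv_apply, WithLp.equiv_apply, hT, Matrix.ofLp_toEuclideanCLM]
    simpa using hA.mulVec_eigenvectorBasis i
  have hrepr : ∀ i, b.repr (T x) i = hA.eigenvalues i * b.repr x i := by
    intro i
    rw [b.repr_apply_apply, b.repr_apply_apply, ← hsym, hTb i, real_inner_smul_left]
  calc ‖T x‖ = ‖b.repr (T x)‖ := (b.repr.norm_map _).symm
    _ ≤ r * ‖b.repr x‖ := by
        rw [EuclideanSpace.norm_eq, EuclideanSpace.norm_eq,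
          show r * Real.sqrt (∑ i, ‖b.repr x i‖ ^ 2)
              = Real.sqrt (r ^ 2 * ∑ i, ‖b.repr x i‖ ^ 2) by
            rw [Real.sqrt_mul (sq_nonneg r), Real.sqrt_sq hr]]
        apply Real.sqrt_le_sqrt
        rw [Finset.mul_sum]
        refine Finset.sum_le_sum fun i _ => ?_
        rw [hrepr i]
        have hi := h i
        have h1 : |hA.eigenvalues i * b.repr x i| ≤ r * |b.repr x i| := by
          rw [abs_mul]
          exact mul_le_mul_of_nonneg_right hi (abs_nonneg _)
        simp only [Real.norm_eq_abs]
        nlinarith [abs_nonneg (hA.eigenvalues i * b.repr x i), abs_nonneg (b.repr x i),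
          sq_abs (hA.eigenvalues i * b.repr x i), sq_abs (b.repr x i)]
    _ = r * ‖x‖ := by rw [b.repr.norm_map]

open Matrix in
lemma vecMulVec_mulVec' {N : ℕ} (w v x : Fin N → ℝ) :
    Matrix.vecMulVec w v *ᵥ x = (v ⬝ᵥ x) • w := by
  funext i
  simp only [Matrix.mulVec, Matrix.vecMulVec_apply, dotProduct, Pi.smul_apply,
    smul_eq_mul, Finset.sum_mul, mul_assoc]
  exact Finset.sum_congr rfl fun j _ => by ring

open Matrix in
lemma sum_mulVec' {N M : ℕ} (A : Fin M → Matrix (Fin N) (Fin N) ℝ) (x : Fin N → ℝ) :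
    (∑ i, A i) *ᵥ x = ∑ i, A i *ᵥ x := by
  funext j
  simp only [Matrix.mulVec, dotProduct, Matrix.sum_apply, Finset.sum_apply,
    Finset.sum_mul]
  rw [Finset.sum_comm]

open Matrix in
lemma frameOp_quad {N M : ℕ} (φ : Fin M → (Fin N → ℝ)) (c : Fin M → ℝ) (x : Fin N → ℝ) :
    x ⬝ᵥ (frameOp φ c *ᵥ x) = ∑ i, c i * (φ i ⬝ᵥ x) ^ 2 := by
  unfold frameOp
  rw [sum_mulVec']
  rw [show x ⬝ᵥ (∑ i, (c i • Matrix.vecMulVec (φ i) (φ i)) *ᵥ x)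
      = ∑ i, x ⬝ᵥ ((c i • Matrix.vecMulVec (φ i) (φ i)) *ᵥ x) from by
    simp only [dotProduct, Finset.sum_apply, Finset.mul_sum]
    exact Finset.sum_comm]
  refine Finset.sum_congr rfl fun i _ => ?_
  rw [Matrix.smul_mulVec, vecMulVec_mulVec', dotProduct_smul, dotProduct_smul,
    dotProduct_comm]
  simp [sq, mul_assoc]

open Matrix in
lemma frameOp_one_posDef {N M : ℕ} (φ : Fin M → (Fin N → ℝ))
    (hspan : Submodule.span ℝ (Set.range φ) = ⊤)
    (hH : (frameOp φ (fun _ => 1)).IsHermitian) :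
    (frameOp φ (fun _ => (1:ℝ))).PosDef := by
  refine Matrix.PosDef.of_dotProduct_mulVec_pos hH fun x hx => ?_
  have hstar : star x = x := rfl
  rw [hstar, frameOp_quad]
  simp only [one_mul]
  rcases lt_or_eq_of_le (Finset.sum_nonneg fun i _ => sq_nonneg (φ i ⬝ᵥ x)) with h | h
  · exact h
  · exfalso
    have hz : ∀ i, φ i ⬝ᵥ x = 0 := by
      intro i
      have := (Finset.sum_eq_zero_iff_of_nonneg (fun i _ => sq_nonneg (φ i ⬝ᵥ x))).mp h.symm i
        (Finset.mem_univ i)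
      exact (pow_eq_zero_iff (two_ne_zero)).mp this
    have hy : ∀ y ∈ Submodule.span ℝ (Set.range φ), y ⬝ᵥ x = 0 := by
      intro y hy
      induction hy using Submodule.span_induction with
      | mem y hmem => obtain ⟨i, rfl⟩ := hmem; exact hz i
      | zero => simp
      | add a b _ _ ha hb => simp [add_dotProduct, ha, hb]
      | smul r a _ ha => simp [smul_dotProduct, ha]
    have hxx : x ⬝ᵥ x = 0 := hy x (by rw [hspan]; trivial)
    exact hx (dotProduct_self_eq_zero.mp hxx)

set_option maxHeartbeats 1000000

lemma mem_spectrum_of_one_sub {N : ℕ} (Mt : Matrix (Fin N) (Fin N) ℝ) (k : ℝ)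
    (hk : k ∈ spectrum ℝ (1 - Mt)) : ∃ s ∈ spectrum ℝ Mt, k = 1 - s := by
  have h1 := spectrum.singleton_sub_eq Mt (1 : ℝ)
  rw [map_one] at h1
  rw [← h1] at hk
  obtain ⟨a, ha, b, hb, hab⟩ := Set.mem_sub.mp hk
  rw [Set.mem_singleton_iff] at ha
  exact ⟨b, hb, by rw [← hab, ha]⟩

/-- if `Φ` spans `ℝ^N` and `c' ≥ 0` attains the infimum of `‖I - S(c)‖₂`
over `c ≥ 0`, then `cond(S(c')) ≤ cond(ΦΦᵀ)` where `ΦΦᵀ = S(1) = ∑ φ_i φ_iᵀ` is the frame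
operator; the condition-number inequality is expressed in the cross-multiplied form
`λ_max(S(c')) · λ_min(ΦΦᵀ) ≤ λ_min(S(c')) · λ_max(ΦΦᵀ)`. -/
theorem stmt_7 (N M : ℕ) (hN : 0 < N) (φ : Fin M → (Fin N → ℝ))
    (hspan : Submodule.span ℝ (Set.range φ) = ⊤)
    (hH : ∀ c : Fin M → ℝ, (frameOp φ c).IsHermitian)
    (c' : Fin M → ℝ) (hc' : ∀ i, 0 ≤ c' i)
    (hopt : ∀ d : Fin M → ℝ, (∀ i, 0 ≤ d i) →
      opNorm (1 - frameOp φ c') ≤ opNorm (1 - frameOp φ d)) :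
    lamMax (hH c') * lamMin (hH (fun _ => 1)) ≤ lamMin (hH c') * lamMax (hH (fun _ => 1)) := by
  haveI : Nonempty (Fin N) := Fin.pos_iff_nonempty.mp hN
  set eig1 := (hH (fun _ => 1)).eigenvalues with heig1
  set A := lamMin (hH (fun _ => 1)) with hAdef
  set B := lamMax (hH (fun _ => 1)) with hBdef
  have hbddAbove : BddAbove (Set.range eig1) := Set.Finite.bddAbove (Set.finite_range _)
  have hbddBelow : BddBelow (Set.range eig1) := Set.Finite.bddBelow (Set.finite_range _)
  have hA_le : ∀ i, A ≤ eig1 i := fun i => ciInf_le hbddBelow i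
  have hle_B : ∀ i, eig1 i ≤ B := fun i => le_ciSup hbddAbove i
  have hposdef := frameOp_one_posDef φ hspan (hH (fun _ => 1))
  have hApos : 0 < A := by
    obtain ⟨i, hi⟩ := exists_eq_ciInf_of_finite (f := eig1)
    rw [hAdef, lamMin, ← hi]
    exact hposdef.eigenvalues_pos i
  have hAB : A ≤ B := le_trans (hA_le (Classical.arbitrary _)) (hle_B (Classical.arbitrary _))
  have hABpos : 0 < A + B := by linarith
  set t : ℝ := 2 / (A + B) with htdef
  have ht : 0 < t := div_pos two_pos hABpos
  set r : ℝ := (B - A) / (A + B) with hrdef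
  have hr0 : 0 ≤ r := div_nonneg (by linarith) hABpos.le
  -- frameOp φ (fun _ => t) = t • frameOp φ (fun _ => 1)
  have hfd : frameOp φ (fun _ => t) = t • frameOp φ (fun _ => 1) := by
    simp [frameOp, Finset.smul_sum]
  -- bound ε := opNorm (1 - frameOp φ c') ≤ r
  set ε := opNorm (1 - frameOp φ c') with hεdef
  have hε0 : 0 ≤ ε := norm_nonneg _
  have hεr : ε ≤ r := by
    refine le_trans (hopt (fun _ => t) (fun _ => ht.le)) ?_
    have hherm : (1 - frameOp φ (fun _ => t)).IsHermitian :=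
      Matrix.isHermitian_one.sub (hH _)
    refine opNorm_le_of_eig hherm hr0 fun i => ?_
    have hk := hherm.eigenvalues_mem_spectrum_real i
    obtain ⟨s, hs, hks⟩ := mem_spectrum_of_one_sub _ _ hk
    rw [hfd] at hs
    -- s ∈ spectrum ℝ (t • S1), so s = t * μ for some eigenvalue μ
    have hst : s / t ∈ spectrum ℝ (frameOp φ (fun _ => 1)) := by
      rw [← spectrum.smul_mem_smul_iff (r := Units.mk0 t ht.ne')]
      have h5 : (Units.mk0 t ht.ne') • (s / t) = s := by
        rw [Units.smul_def]
        simp only [Units.val_mk0, smul_eq_mul]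
        field_simp
      have h6 : (Units.mk0 t ht.ne') • (frameOp φ (fun _ => 1)) = t • frameOp φ (fun _ => 1) := by
        rw [Units.smul_def]
        norm_num
      rw [h5, h6]
      exact hs
    rw [(hH (fun _ => 1)).spectrum_real_eq_range_eigenvalues] at hst
    obtain ⟨j, hj⟩ := hst
    have h1 : A ≤ s / t := by rw [← hj]; exact hA_le j
    have h2 : s / t ≤ B := by rw [← hj]; exact hle_B j
    have hμval : s = t * (s / t) := by field_simp
    rw [hks, hμval, abs_le]
    have e1 : (1 : ℝ) - t * (s / t) = (A + B - 2 * (s / t)) / (A + B) := by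
      rw [htdef]
      field_simp
    have e2 : -r = (A - B) / (A + B) := by rw [hrdef]; ring
    constructor
    · rw [e1, e2, div_le_div_iff₀ hABpos hABpos]
      nlinarith
    · rw [e1, hrdef, div_le_div_iff₀ hABpos hABpos]
      nlinarith
  -- eigenvalues of frameOp φ c' lie in [1 - ε, 1 + ε]
  have heig' : ∀ i, 1 - ε ≤ (hH c').eigenvalues i ∧ (hH c').eigenvalues i ≤ 1 + ε := by
    intro i
    have hk := (hH c').eigenvalues_mem_spectrum_real i
    have hmem : 1 - (hH c').eigenvalues i ∈ spectrum ℝ (1 - frameOp φ c') := by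
      have h1 := spectrum.singleton_sub_eq (frameOp φ c') (1 : ℝ)
      rw [map_one] at h1
      rw [← h1]
      exact Set.sub_mem_sub rfl hk
    have habs := abs_le_opNorm_of_mem_spectrum hN hmem
    rw [← hεdef] at habs
    rw [abs_le] at habs
    constructor <;> linarith [habs.1, habs.2]
  have hmax : lamMax (hH c') ≤ 1 + ε :=
    ciSup_le fun i => (heig' i).2
  have hmin : 1 - ε ≤ lamMin (hH c') :=
    le_ciInf fun i => (heig' i).1
  -- conclude
  have hεAB : ε * (A + B) ≤ B - A := by
    rw [hrdef] at hεr
    rw [← le_div_iff₀ hABpos] at *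
    exact hεr
  have hε1 : ε < 1 := by
    rw [hrdef] at hεr
    have : (B - A) / (A + B) < 1 := by
      rw [div_lt_one hABpos]; linarith
    linarith
  have hBpos : 0 < B := lt_of_lt_of_le hApos hAB
  nlinarith [hmax, hmin, hApos, hBpos, hεAB, hε0, hε1,
    mul_le_mul_of_nonneg_right hmax hApos.le,
    mul_le_mul_of_nonneg_right hmin hBpos.le]
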